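/- Let S be a commutative ring and R an S-algebra (not necessarily unital) containing a non-zero central idempotent e. Then the Dorroh extension D of R by S is i-reversible if and only if D is reversible. -/

import Mathlib

/-- A ring is *i-reversible* if whenever `a * b` is a non-zero idempotent, `b * a` is an
idempotent. -/
def IsIReversible (S : Type*) [Ring S] : Prop :=
  ∀ a b : S, IsIdempotentElem (a * b) → a * b ≠ 0 → IsIdempotentElem (b * a)

/-- A ring is *reversible* if `a * b = 0` implies `b * a = 0`. -/
def IsReversible (S : Type*) [Ring S] : Prop :=
  ∀ a b : S, a * b = 0 → b * a = 0

/-- A ring has only trivial idempotents if its only idempotents are `0` and `1`. -/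
def HasOnlyTrivialIdempotents (S : Type*) [Ring S] : Prop :=
  ∀ e : S, IsIdempotentElem e → e = 0 ∨ e = 1

/-- Key auxiliary lemma: in an i-reversible ring, a nonzero central idempotent `f`
kills the obstruction: if `a*b = 0` then `(1-f)*(b*a) = 0`. -/
lemma aux_kill {D : Type*} [Ring D] (hir : IsIReversible D) (f : D)
    (hf : f * f = f) (hf0 : f ≠ 0) (hcf : ∀ x : D, f * x = x * f)
    (a b : D) (hab : a * b = 0) : (1 - f) * (b * a) = 0 := by
  set u : D := f + b * (1 - f) with hu
  set v : D := f + (1 - f) * a with hv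
  have hvu : v * u = f := by
    have h1 : f * (b * (1 - f)) = 0 := by
      rw [← mul_assoc, hcf b, mul_assoc, mul_sub, mul_one, hf, sub_self, mul_zero]
    have h2 : ((1 - f) * a) * f = 0 := by
      rw [mul_assoc, ← hcf a, ← mul_assoc, sub_mul, one_mul, hf, sub_self, zero_mul]
    have h3 : ((1 - f) * a) * (b * (1 - f)) = 0 := by
      rw [mul_assoc, ← mul_assoc a, hab, zero_mul, mul_zero]
    rw [hv, hu, add_mul, mul_add, mul_add, hf, h1, h2, h3, add_zero, add_zero, add_zero]
  have huv : u * v = f + (1 - f) * (b * a) := by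
    have h1 : f * ((1 - f) * a) = 0 := by
      rw [← mul_assoc, mul_sub, mul_one, hf, sub_self, zero_mul]
    have h2 : (b * (1 - f)) * f = 0 := by
      rw [mul_assoc, ← hcf, mul_sub, mul_one, hf, sub_self, mul_zero]
    have h3 : (b * (1 - f)) * ((1 - f) * a) = (1 - f) * (b * a) := by
      have h4 : (1 - f) * (1 - f) = 1 - f := by
        rw [sub_mul, one_mul, mul_sub, mul_one, hf]; abel
      have hc' : ∀ x : D, (1 - f) * x = x * (1 - f) := fun x => by
        rw [sub_mul, one_mul, mul_sub, mul_one, hcf]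
      rw [mul_assoc, ← mul_assoc (1-f) (1-f) a, h4, ← mul_assoc b (1-f) a, ← hc' b,
        mul_assoc]
    rw [hu, hv, add_mul, mul_add, mul_add, hf, h1, h2, h3, add_zero, zero_add]
  have hidem : IsIdempotentElem (u * v) := by
    apply hir v u
    · rw [hvu]; exact hf
    · rw [hvu]; exact hf0
  set w : D := (1 - f) * (b * a) with hw
  have hcw : ∀ x : D, (1 - f) * x = x * (1 - f) := fun x => by
    rw [sub_mul, one_mul, mul_sub, mul_one, hcf]
  have hba2 : (b * a) * (b * a) = 0 := by
    rw [mul_assoc, ← mul_assoc a, hab, zero_mul, mul_zero]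
  have hw2 : w * w = 0 := by
    rw [hw, mul_assoc, hcw (b*a), ← mul_assoc (b*a), hba2, zero_mul, mul_zero]
  have hfw : f * w = 0 := by
    rw [hw, ← mul_assoc, mul_sub, mul_one, hf, sub_self, zero_mul]
  have hwf : w * f = 0 := by
    rw [hw, mul_assoc, ← hcf (b*a), ← mul_assoc, sub_mul, one_mul, hf, sub_self, zero_mul]
  have hsq : (f + w) * (f + w) = f := by
    rw [add_mul, mul_add, mul_add, hf, hfw, hwf, hw2, add_zero, add_zero, add_zero]
  have hfwf : f + w = f := by
    have h := hidem
    unfold IsIdempotentElem at h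
    rw [huv, hsq] at h
    exact h.symm
  have hw0 : w = 0 := by
    nth_rewrite 2 [← add_zero f] at hfwf
    exact add_left_cancel hfwf
  exact hw0

lemma rev_to_irev {D : Type*} [Ring D] (h : IsReversible D) : IsIReversible D := by
  intro a b hab _
  have h1 : a * (b * (a * b) - b) = 0 := by
    have h0 : (a * b) * (a * b) = a * b := hab
    calc a * (b * (a * b) - b) = (a * b) * (a * b) - a * b := by noncomm_ring
    _ = 0 := by rw [h0, sub_self]
  have h2 := h _ _ h1
  have h3 : (b * a) * (b * a) - b * a = 0 := by
    calc (b * a) * (b * a) - b * a = (b * (a * b) - b) * a := by noncomm_ring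
    _ = 0 := h2
  exact sub_eq_zero.mp h3


/-- For a commutative ring `S` and a (not necessarily unital) `S`-algebra `R` containing a
non-zero central idempotent, the Dorroh extension of `R` by `S` (here `Unitization S R`) is
i-reversible if and only if it is reversible. -/
theorem dorroh_isIReversible_iff_isReversible (S : Type*) [CommRing S] (R : Type*)
    [NonUnitalRing R] [Module S R] [IsScalarTower S R R] [SMulCommClass S R R]
    (e : R) (he : e * e = e) (he0 : e ≠ 0) (hcentral : ∀ r : R, e * r = r * e) :
    IsIReversible (Unitization S R) ↔ IsReversible (Unitization S R) := by
  constructor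
  · intro hir a b hab
    set ε : Unitization S R := Unitization.inr e with hε
    have hε2 : ε * ε = ε := by
      rw [hε, ← Unitization.inr_mul, he]
    have hεsnd : ε.snd = e := rfl
    have hεfst : ε.fst = 0 := rfl
    have hε0 : ε ≠ 0 := by
      intro h
      apply he0
      have := congrArg (fun x : Unitization S R => x.snd) h
      exact this
    have hεc : ∀ x : Unitization S R, ε * x = x * ε := by
      intro x
      ext
      · simp [Unitization.fst_mul, hεfst]
      · simp [Unitization.snd_mul, hεfst, hεsnd, hcentral x.snd]
    have h1 := aux_kill hir ε hε2 hε0 hεc a b hab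
    -- now with 1 - ε
    have hδ2 : (1 - ε) * (1 - ε) = 1 - ε := by
      rw [sub_mul, one_mul, mul_sub, mul_one, hε2]; abel
    have hδ0 : (1 - ε) ≠ 0 := by
      intro h
      apply he0
      have h' : (1 : Unitization S R) = ε := by
        have := sub_eq_zero.mp h; exact this
      have := congrArg (fun x : Unitization S R => x.snd) h'
      simpa [hεsnd] using this.symm
    have hδc : ∀ x : Unitization S R, (1 - ε) * x = x * (1 - ε) := fun x => by
      rw [sub_mul, one_mul, mul_sub, mul_one, hεc]
    have h2 := aux_kill hir (1 - ε) hδ2 hδ0 hδc a b hab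
    rw [sub_sub_cancel] at h2
    calc b * a = (1 - ε) * (b * a) + ε * (b * a) := by noncomm_ring
    _ = 0 := by rw [h1, h2, add_zero]
  · exact rev_to_irev
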